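/- Under the hypotheses of the previous secant-error lemma, the implicitly computed cosine ĉ = fl(1/ŝ) and sine ŝn = fl(t̂/ŝ) satisfy ĉ = δ''·cos θ and ŝn = δ'''·sin θ, with (1-ε)/δ'⁺ ≤ δ'' ≤ (1+ε)/δ'⁻ and (1-ε)(1-ε)/δ'⁺ ≤ δ''' ≤ (1+ε)(1+ε)/δ'⁻, where δ'⁻ = √(((1-ε)²+1)/2)(1-ε) and δ'⁺ = √(((1+ε)²+1)/2)(1+ε). -/

import Mathlib

open Real

/-- Given `t' = δθ tan θ` with `|δθ - 1| ≤ ε`, and `s' = δ' sec θ` with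
`δ'⁻ ≤ δ' ≤ δ'⁺` (the bounds of the secant-error lemma), the computed cosine
`c' = (1+e₁)/s'` and sine `n' = (1+e₂)·t'/s'` (each division with relative error `≤ ε`)
satisfy `c' = δ'' cos θ` and `n' = δ''' sin θ` with
`(1-ε)/δ'⁺ ≤ δ'' ≤ (1+ε)/δ'⁻` and `(1-ε)²/δ'⁺ ≤ δ''' ≤ (1+ε)²/δ'⁻`. -/
theorem stmt_7 (p : ℕ) (hp : 1 ≤ p) (ε : ℝ) (hε : ε = 2 ^ (-(p : ℤ)))
    (θ : ℝ) (hθ1 : 0 < θ) (hθ2 : θ ≤ π / 4)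
    (δθ t' δ' s' : ℝ) (hδ1 : 1 - ε ≤ δθ) (hδ2 : δθ ≤ 1 + ε)
    (ht : t' = δθ * Real.tan θ)
    (hs : s' = δ' * Real.sqrt (Real.tan θ ^ 2 + 1))
    (hδ'l : Real.sqrt (((1 - ε) ^ 2 + 1) / 2) * (1 - ε) ≤ δ')
    (hδ'u : δ' ≤ Real.sqrt (((1 + ε) ^ 2 + 1) / 2) * (1 + ε))
    (c' n' e₁ e₂ : ℝ) (he₁ : |e₁| ≤ ε) (he₂ : |e₂| ≤ ε)
    (hc : c' = (1 + e₁) * (1 / s'))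
    (hn : n' = (1 + e₂) * (t' / s')) :
    ∃ δ'' δ''' : ℝ,
      c' = δ'' * Real.cos θ ∧ n' = δ''' * Real.sin θ ∧
      (1 - ε) / (Real.sqrt (((1 + ε) ^ 2 + 1) / 2) * (1 + ε)) ≤ δ'' ∧
      δ'' ≤ (1 + ε) / (Real.sqrt (((1 - ε) ^ 2 + 1) / 2) * (1 - ε)) ∧
      (1 - ε) * (1 - ε) / (Real.sqrt (((1 + ε) ^ 2 + 1) / 2) * (1 + ε)) ≤ δ''' ∧
      δ''' ≤ (1 + ε) * (1 + ε) / (Real.sqrt (((1 - ε) ^ 2 + 1) / 2) * (1 - ε)) := by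
  have hεpos : 0 < ε := by rw [hε]; positivity
  have hε2 : ε ≤ 1/2 := by
    rw [hε]
    calc (2:ℝ) ^ (-(p:ℤ)) ≤ 2 ^ (-(1:ℤ)) := by
          apply zpow_le_zpow_right₀ one_le_two
          omega
      _ = 1/2 := by norm_num
  have h1ε : 0 < 1 - ε := by linarith
  have hcos : 0 < Real.cos θ := by
    apply Real.cos_pos_of_mem_Ioo
    constructor
    · linarith [Real.pi_pos]
    · linarith [Real.pi_pos]
  have hcosne : Real.cos θ ≠ 0 := ne_of_gt hcos
  have hsec : Real.sqrt (Real.tan θ ^ 2 + 1) = 1 / Real.cos θ := by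
    have h : Real.tan θ ^ 2 + 1 = (1 / Real.cos θ) ^ 2 := by
      rw [Real.tan_eq_sin_div_cos]
      field_simp
      exact Real.sin_sq_add_cos_sq θ
    rw [h, Real.sqrt_sq (by positivity)]
  have hδ'mpos : 0 < Real.sqrt (((1 - ε) ^ 2 + 1) / 2) * (1 - ε) := by positivity
  have hδ'pos : 0 < δ' := lt_of_lt_of_le hδ'mpos hδ'l
  have he₁l : 1 - ε ≤ 1 + e₁ := by have := abs_le.mp he₁; linarith [this.1]
  have he₁u : 1 + e₁ ≤ 1 + ε := by have := abs_le.mp he₁; linarith [this.2]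
  have he₂l : 1 - ε ≤ 1 + e₂ := by have := abs_le.mp he₂; linarith [(abs_le.mp he₂).1]
  have he₂u : 1 + e₂ ≤ 1 + ε := by linarith [(abs_le.mp he₂).2]
  refine ⟨(1 + e₁) / δ', ((1 + e₂) * δθ) / δ', ?_, ?_, ?_, ?_, ?_, ?_⟩
  · rw [hc, hs, hsec]
    field_simp
  · rw [hn, ht, hs, hsec, ← Real.tan_mul_cos hcosne]
    field_simp
  · exact div_le_div₀ (by linarith) he₁l hδ'pos hδ'u
  · exact div_le_div₀ (by linarith) he₁u hδ'mpos hδ'l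
  · apply div_le_div₀ (by nlinarith) _ hδ'pos hδ'u
    apply mul_le_mul he₂l hδ1 (by linarith) (by linarith)
  · apply div_le_div₀ (by nlinarith) _ hδ'mpos hδ'l
    apply mul_le_mul he₂u hδ2 (by linarith) (by linarith)
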